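/- For every t ∈ [0, 1), arcsin(t) < π/2 - √(2 - 2t). -/
import Mathlib

/-- For every `t ∈ [0, 1)`, `arcsin t < π/2 - √(2 - 2t)`. -/
theorem arcsin_lt_pi_div_two_sub_sqrt (t : ℝ) (ht0 : 0 ≤ t) (ht1 : t < 1) :
    Real.arcsin t < Real.pi / 2 - Real.sqrt (2 - 2 * t) := by
  have ht1' : t ≤ 1 := ht1.le
  have htm : (-1 : ℝ) ≤ t := by linarith
  set θ := Real.arccos t with hθ
  have hθpos : 0 < θ := Real.arccos_pos.mpr ht1
  have hcos : Real.cos θ = t := Real.cos_arccos htm ht1'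
  have harcsin : Real.arcsin t = Real.pi / 2 - θ := by
    have := Real.arccos t
    rw [hθ, Real.arccos]; ring
  have h2t : 2 - 2 * t = (2 * Real.sin (θ/2)) ^ 2 := by
    have h1 : Real.cos (2 * (θ/2)) = 2 * Real.cos (θ/2) ^ 2 - 1 := Real.cos_two_mul _
    have h2 : Real.sin (θ/2) ^ 2 + Real.cos (θ/2) ^ 2 = 1 := Real.sin_sq_add_cos_sq _
    have h3 : 2 * (θ/2) = θ := by ring
    rw [h3] at h1
    nlinarith [hcos]
  have hsinpos : 0 < Real.sin (θ/2) := by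
    apply Real.sin_pos_of_pos_of_lt_pi (by linarith)
    have := Real.arccos_le_pi t
    rw [← hθ] at this
    nlinarith [Real.pi_pos]
  have hsqrt : Real.sqrt (2 - 2 * t) = 2 * Real.sin (θ/2) := by
    rw [h2t, Real.sqrt_sq (by linarith)]
  have hlt : Real.sin (θ/2) < θ/2 := Real.sin_lt (by linarith)
  rw [harcsin, hsqrt]
  linarith
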